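/- For any f ∈ C[a,b], any ε > 0, and any constant c₁, there exists a continuous function h on [a,b] with ‖h − f‖_{L^p[a,b]} < ε (1 ≤ p < ∞), h(b) = h(a) + c₁, and ∫_a^b h(x) dx = ∫_a^b f(x) dx. -/

import Mathlib

lemma aux_poly_int (a b : ℝ) (hab : a < b) (N : ℕ) :
    ∫ x in a..b, ((x - a)/(b - a))^N = (b - a)/(N + 1) := by
  have hba : (0:ℝ) < b - a := by linarith
  have : ∫ x in a..b, ((x - a)/(b - a))^N
      = ∫ x in a..b, (x - a)^N / (b - a)^N := by
    simp [div_pow]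
  rw [this]
  have h2 : ∫ x in a..b, (x - a)^N = (b-a)^(N+1)/(N+1) := by
    have := intervalIntegral.integral_comp_sub_right (a := a) (b := b) (fun x => x^N) a
    rw [this]
    simp [integral_pow]
  rw [intervalIntegral.integral_div, h2]
  rw [pow_succ]
  field_simp

theorem stmt_6 (a b : ℝ) (hab : a < b) (p : ℝ) (hp : 1 ≤ p)
    (f : ℝ → ℝ) (hf : ContinuousOn f (Set.Icc a b))
    (ε : ℝ) (hε : 0 < ε) (c1 : ℝ) :
    ∃ h : ℝ → ℝ, ContinuousOn h (Set.Icc a b) ∧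
      (∫ x in a..b, |h x - f x| ^ p) ^ (1 / p) < ε ∧
      h b = h a + c1 ∧
      ∫ x in a..b, h x = ∫ x in a..b, f x := by
  have hp0 : (0:ℝ) < p := by linarith
  have hba : (0:ℝ) < b - a := by linarith
  set d : ℝ := c1 - (f b - f a) with hd
  by_cases hd0 : d = 0
  · refine ⟨f, hf, ?_, by simp [hd] at hd0; linarith, rfl⟩
    have : (∫ x in a..b, |f x - f x| ^ p) = 0 := by
      simp [Real.zero_rpow hp0.ne']
    rw [this, Real.zero_rpow (by positivity)]
    exact hε
  · -- main case
    have hD : (0:ℝ) < 2 * |d| := by positivity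
    -- choose N
    have hεp : (0:ℝ) < ε ^ p := Real.rpow_pos_of_pos hε p
    obtain ⟨n, hn⟩ := exists_nat_gt ((2 * |d|) ^ p * (b - a) / ε ^ p)
    set N : ℕ := n + 1 with hN
    have hNbound : (2 * |d|) ^ p * (b - a) / (N + 1) < ε ^ p := by
      rw [div_lt_iff₀ (by positivity)]
      have h1 : (2 * |d|) ^ p * (b - a) < ε ^ p * n := by
        rw [div_lt_iff₀ hεp] at hn
        calc (2 * |d|) ^ p * (b - a) < n * ε ^ p := hn
        _ = ε ^ p * n := by ring
      have : (0:ℝ) < ε ^ p * 2 := by positivity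
      push_cast [hN]
      nlinarith
    set g : ℝ → ℝ := fun x => d * ((x - a)/(b - a))^N - d/(N + 1) with hg
    have hgc : Continuous g := by fun_prop
    refine ⟨fun x => f x + g x, ?_, ?_, ?_, ?_⟩
    · exact hf.add hgc.continuousOn
    · -- Lp bound
      have key : ∀ x ∈ Set.Icc a b, |g x| ^ p ≤
          (2 * |d|) ^ (p - 1) * (|d| * (((x - a)/(b - a))^N + 1/(N + 1))) := by
        intro x hx
        have hu0 : (0:ℝ) ≤ (x - a)/(b - a) := by
          apply div_nonneg _ hba.le
          linarith [hx.1]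
        have hu1 : (x - a)/(b - a) ≤ 1 := by
          rw [div_le_one hba]
          linarith [hx.2]
        have h1 : |g x| ≤ |d| * (((x - a)/(b - a))^N + 1/(N + 1)) := by
          calc |g x| ≤ |d * ((x - a)/(b - a))^N| + |d/(N + 1)| := abs_sub _ _
          _ = |d| * ((x - a)/(b - a))^N + |d| * (1/(N+1)) := by
              rw [abs_mul, abs_div, abs_pow, abs_of_nonneg hu0]
              push_cast
              rw [abs_of_nonneg (by positivity : (0:ℝ) ≤ (N:ℝ)+1)]
              ring
          _ = _ := by ring
        have h2 : |g x| ≤ 2 * |d| := by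
          have : ((x - a)/(b - a))^N + 1/((N:ℝ) + 1) ≤ 2 := by
            have : ((x - a)/(b - a))^N ≤ 1 := pow_le_one₀ hu0 hu1
            have h3 : 1/((N:ℝ)+1) ≤ 1 := by
              rw [div_le_one (by positivity)]
              push_cast; linarith
            linarith
          calc |g x| ≤ |d| * (((x - a)/(b - a))^N + 1/(N + 1)) := h1
          _ ≤ |d| * 2 := by
              apply mul_le_mul_of_nonneg_left this (abs_nonneg d)
          _ = 2 * |d| := by ring
        calc |g x| ^ p = |g x| ^ (p - 1) * |g x| := by
              rw [← Real.rpow_add_one' (abs_nonneg _) (by linarith)]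
              ring_nf
        _ ≤ (2 * |d|) ^ (p - 1) * (|d| * (((x - a)/(b - a))^N + 1/(N + 1))) := by
            apply mul_le_mul
            · exact Real.rpow_le_rpow (abs_nonneg _) h2 (by linarith)
            · exact h1
            · exact abs_nonneg _
            · positivity
      have hint1 : IntervalIntegrable (fun x => |g x| ^ p) MeasureTheory.volume a b := by
        apply Continuous.intervalIntegrable
        apply Continuous.rpow_const (continuous_abs.comp hgc)
        intro x; right; exact hp0.le
      have hint2 : IntervalIntegrable (fun x =>
          (2 * |d|) ^ (p - 1) * (|d| * (((x - a)/(b - a))^N + 1/(N + 1))))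
          MeasureTheory.volume a b := by
        apply Continuous.intervalIntegrable
        fun_prop
      have hmono := intervalIntegral.integral_mono_on hab.le hint1 hint2 key
      have hcomp : ∫ x in a..b,
          (2 * |d|) ^ (p - 1) * (|d| * (((x - a)/(b - a))^N + 1/(N + 1)))
          = (2 * |d|) ^ (p - 1) * (|d| * ((b - a)/(N + 1) + (b - a)/(N + 1))) := by
        rw [intervalIntegral.integral_const_mul]
        congr 1
        rw [intervalIntegral.integral_const_mul]
        congr 1
        rw [intervalIntegral.integral_add (by apply Continuous.intervalIntegrable; fun_prop)
          (by apply Continuous.intervalIntegrable; fun_prop)]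
        rw [aux_poly_int a b hab N]
        simp
        field_simp
      have hval : (2 * |d|) ^ (p - 1) * (|d| * ((b - a)/(N + 1) + (b - a)/(N + 1)))
          = (2 * |d|) ^ p * (b - a) / (N + 1) := by
        have : (2 * |d|) ^ p = (2 * |d|) ^ (p-1) * (2 * |d|) := by
          rw [← Real.rpow_add_one' (by positivity) (by linarith)]
          ring_nf
        rw [this]
        field_simp
        ring
      have hIle : (∫ x in a..b, |g x| ^ p) < ε ^ p := by
        calc (∫ x in a..b, |g x| ^ p) ≤ _ := hmono
        _ = (2 * |d|) ^ p * (b - a) / (N + 1) := by rw [hcomp, hval]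
        _ < ε ^ p := hNbound
      have hI0 : (0:ℝ) ≤ ∫ x in a..b, |g x| ^ p := by
        apply intervalIntegral.integral_nonneg hab.le
        intro x _; positivity
      have hsimp : (fun x => |f x + g x - f x| ^ p) = fun x => |g x| ^ p := by
        funext x; ring_nf
      calc (∫ x in a..b, |f x + g x - f x| ^ p) ^ (1/p)
          = (∫ x in a..b, |g x| ^ p) ^ (1/p) := by rw [hsimp]
      _ < (ε ^ p) ^ (1/p) := Real.rpow_lt_rpow hI0 hIle (by positivity)
      _ = ε := by
          rw [← Real.rpow_mul hε.le, mul_one_div_cancel hp0.ne', Real.rpow_one]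
    · -- endpoint
      have hga : g a = - (d/(N + 1)) := by
        simp [hg, hN]
      have hgb : g b = d - d/(N + 1) := by
        simp [hg, div_self hba.ne']
      show f b + g b = f a + g a + c1
      rw [hga, hgb, hd]; ring
    · -- integral equality
      have hfi : IntervalIntegrable f MeasureTheory.volume a b := by
        apply ContinuousOn.intervalIntegrable
        rwa [Set.uIcc_of_le hab.le]
      have hsplit : ∫ x in a..b, (f x + g x) = (∫ x in a..b, f x) + ∫ x in a..b, g x :=
        intervalIntegral.integral_add hfi (hgc.intervalIntegrable a b)
      have hg0 : ∫ x in a..b, g x = 0 := by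
        have : ∫ x in a..b, g x
            = (∫ x in a..b, d * ((x - a)/(b - a))^N) - ∫ x in a..b, (d/(N+1) : ℝ) := by
          apply intervalIntegral.integral_sub
          · apply Continuous.intervalIntegrable; fun_prop
          · apply Continuous.intervalIntegrable; fun_prop
        rw [this, intervalIntegral.integral_const_mul, aux_poly_int a b hab N,
          intervalIntegral.integral_const]
        push_cast
        have hN1 : (N:ℝ) + 1 ≠ 0 := by positivity
        rw [smul_eq_mul]
        field_simp
        ring
      rw [hsplit, hg0, add_zero]
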